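/- Let H ∈ (0,1/2), T > 0 and γ ∈ (0,H). Then there exists a constant C_{H,T} > 0, depending only on H and T (and γ), such that for all 0 < t_0′ < t_0 < t ≤ T, K_H(t,t_0) − K_H(t,t_0′) ≤ C_{H,T} ((t_0 − t_0′)^γ / (t_0 t_0′)^γ) · t_0^{H − 1/2 − γ} (t − t_0)^{H − 1/2 − γ}. -/

import Mathlib

open MeasureTheory Real Filter Set
open scoped ENNReal NNReal BigOperators Classical

noncomputable section

/-- Euler Beta function `B(a,b) = Γ(a)Γ(b)/Γ(a+b)`. -/
def eulerBeta (a b : ℝ) : ℝ := Real.Gamma a * Real.Gamma b / Real.Gamma (a + b)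

/-- Normalizing constant `c_H` of the fractional Brownian kernel. -/
def cH (H : ℝ) : ℝ := Real.sqrt (2 * H / ((1 - 2 * H) * eulerBeta (1 - 2 * H) (H + 1 / 2)))

/-- The fractional Brownian kernel `K_H(t,s)`. -/
def KH (H t s : ℝ) : ℝ :=
  cH H * ((t / s) ^ (H - 1 / 2) * (t - s) ^ (H - 1 / 2)
    + (1 / 2 - H) * s ^ (1 / 2 - H) * ∫ u in Set.Ioo s t, u ^ (H - 3 / 2) * (u - s) ^ (H - 1 / 2))

lemma aux_core {u a γ : ℝ} (hu : 1 ≤ u) (ha : -1 ≤ a) (hγ0 : 0 < γ) (hγ1 : γ ≤ 1) :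
    1 - u ^ a ≤ (u - 1) ^ γ := by
  rcases eq_or_lt_of_le hu with h | hu1
  · simp [← h, Real.one_rpow, Real.zero_rpow (ne_of_gt hγ0)]
  have hu0 : (0:ℝ) < u := lt_trans one_pos hu1
  rcases le_or_gt 1 (u - 1) with h1 | h1
  · have h5 : (1:ℝ) ≤ (u - 1) ^ γ := Real.one_le_rpow h1 hγ0.le
    have h6 : 0 < u ^ a := Real.rpow_pos_of_pos hu0 a
    linarith
  · have hum : 0 < u - 1 := by linarith
    have h2 : (u - 1 : ℝ) ≤ (u - 1) ^ γ := by
      calc (u-1:ℝ) = (u-1) ^ (1:ℝ) := (Real.rpow_one _).symm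
      _ ≤ (u-1) ^ γ := Real.rpow_le_rpow_of_exponent_ge hum h1.le hγ1
    have h3 : u⁻¹ ≤ u ^ a := by
      calc u⁻¹ = u ^ (-1:ℝ) := by rw [Real.rpow_neg_one]
      _ ≤ u ^ a := Real.rpow_le_rpow_of_exponent_le hu ha
    have h4 : 1 - u⁻¹ ≤ u - 1 := by
      have h5 : 1 - u⁻¹ = (u - 1) / u := by field_simp
      rw [h5, div_le_iff₀ hu0]
      nlinarith [sq_nonneg (u-1)]
    linarith

lemma aux_negdiff {x y a γ : ℝ} (hx : 0 < x) (hxy : x ≤ y) (ha1 : -1 ≤ a)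
    (hγ0 : 0 < γ) (hγ1 : γ ≤ 1) : x ^ a - y ^ a ≤ (y - x) ^ γ * x ^ (a - γ) := by
  have hy : 0 < y := lt_of_lt_of_le hx hxy
  have hxa : (0:ℝ) < x ^ a := Real.rpow_pos_of_pos hx a
  have hu : 1 ≤ y / x := (one_le_div hx).mpr hxy
  have hcore := aux_core hu ha1 hγ0 hγ1
  have h1 : x ^ a - y ^ a = x ^ a * (1 - (y/x) ^ a) := by
    rw [Real.div_rpow hy.le hx.le]
    field_simp
  have h2 : (y - x) ^ γ * x ^ (a - γ) = x ^ a * (y/x - 1) ^ γ := by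
    rw [show y/x - 1 = (y-x)/x by field_simp, Real.div_rpow (by linarith) hx.le,
      Real.rpow_sub hx]
    ring
  rw [h1, h2]
  exact mul_le_mul_of_nonneg_left (by simpa using hcore) hxa.le

lemma aux_posdiff {x y b γ : ℝ} (hx : 0 < x) (hxy : x ≤ y) (hb1 : b ≤ 1)
    (hγ0 : 0 < γ) (hγ1 : γ ≤ 1) : y ^ b - x ^ b ≤ (y - x) ^ γ * y ^ b * x ^ (-γ) := by
  have hy : 0 < y := lt_of_lt_of_le hx hxy
  have h := aux_negdiff hx hxy (a := -b) (by linarith) hγ0 hγ1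
  have hmul := mul_le_mul_of_nonneg_left h
    (mul_nonneg (Real.rpow_nonneg hy.le b) (Real.rpow_nonneg hx.le b))
  calc y ^ b - x ^ b
      = y ^ b * x ^ b * (x ^ (-b) - y ^ (-b)) := by
        rw [mul_sub, Real.rpow_neg hx.le, Real.rpow_neg hy.le]
        rw [mul_assoc, mul_inv_cancel₀ (ne_of_gt (Real.rpow_pos_of_pos hx b))]
        rw [mul_comm (y ^ b) (x ^ b), mul_assoc,
          mul_inv_cancel₀ (ne_of_gt (Real.rpow_pos_of_pos hy b))]
        ring
    _ ≤ y ^ b * x ^ b * ((y - x) ^ γ * x ^ (-b - γ)) := hmul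
    _ = (y - x) ^ γ * y ^ b * x ^ (-γ) := by
        rw [show (-b - γ : ℝ) = -b + -γ by ring, Real.rpow_add hx, Real.rpow_neg hx.le b]
        field_simp [ne_of_gt (Real.rpow_pos_of_pos hx b)]

lemma aux_exp {x T e f : ℝ} (hx : 0 < x) (hxT : x ≤ T) (hef : f ≤ e) :
    x ^ e ≤ T ^ (e - f) * x ^ f := by
  have h1 : x ^ e = x ^ (e - f) * x ^ f := by rw [← Real.rpow_add hx]; ring_nf
  rw [h1]
  exact mul_le_mul_of_nonneg_right (Real.rpow_le_rpow hx.le hxT (by linarith))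
    (Real.rpow_nonneg hx.le f)

lemma aux_integrable {p c σ t : ℝ} (hσ : 0 < σ) (hσt : σ ≤ t) (hc : -1 < c) :
    IntervalIntegrable (fun u => u ^ p * (u - σ) ^ c) volume σ t := by
  have h1 : IntervalIntegrable (fun u : ℝ => (u - σ) ^ c) volume σ t := by
    have := (intervalIntegral.intervalIntegrable_rpow' (a := 0) (b := t - σ) hc).comp_sub_right σ
    simpa using this
  have h2 : ContinuousOn (fun u : ℝ => u ^ p) (Set.uIcc σ t) := by
    apply ContinuousOn.rpow_const continuousOn_id
    intro u hu
    rw [Set.uIcc_of_le hσt] at hu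
    exact Or.inl (ne_of_gt (lt_of_lt_of_le hσ hu.1))
  exact h1.continuousOn_mul h2

lemma aux_cint {c σ x : ℝ} (hc : -1 < c) :
    ∫ u in σ..x, (u - σ) ^ c = (x - σ) ^ (c+1) / (c+1) := by
  have := intervalIntegral.integral_comp_sub_right (a := σ) (b := x) (fun w => w ^ c) σ
  rw [this, sub_self, integral_rpow (Or.inl hc), Real.zero_rpow (by linarith), sub_zero]

lemma aux_basic {a c σ x : ℝ} (hσ : 0 < σ) (hσx : σ ≤ x) (ha0 : a < 0) (hc1 : -1 < c)
    (hc0 : c < 0) :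
    ∫ u in σ..x, u ^ (a-1) * (u - σ) ^ c ≤ σ ^ (a-1) * ((x - σ) ^ (c+1) / (c+1)) := by
  have h1 : IntervalIntegrable (fun u : ℝ => (u - σ) ^ c) volume σ x := by
    have := (intervalIntegral.intervalIntegrable_rpow' (a := 0) (b := x - σ) hc1).comp_sub_right σ
    simpa using this
  calc ∫ u in σ..x, u ^ (a-1) * (u - σ) ^ c
      ≤ ∫ u in σ..x, σ ^ (a-1) * (u - σ) ^ c := by
        apply intervalIntegral.integral_mono_on hσx (aux_integrable hσ hσx hc1)
          (h1.const_mul _)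
        intro u hu
        apply mul_le_mul_of_nonneg_right
          (Real.rpow_le_rpow_of_nonpos hσ hu.1 (by linarith))
          (Real.rpow_nonneg (by linarith [hu.1]) c)
    _ = σ ^ (a-1) * ((x - σ) ^ (c+1) / (c+1)) := by
        rw [intervalIntegral.integral_const_mul, aux_cint hc1]

lemma aux_J {a c σ t : ℝ} (hσ : 0 < σ) (hσt : σ < t) (ha0 : a < 0) (hc1 : -1 < c)
    (hc0 : c < 0) :
    ∫ u in σ..t, u ^ (a-1) * (u - σ) ^ c
      ≤ (1/(c+1) + 2 ^ a / (-(a+c))) * σ ^ (a+c) := by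
  have hac : a + c < 0 := by linarith
  have hc1' : (0:ℝ) < c + 1 := by linarith
  have hσac : (0:ℝ) < σ ^ (a+c) := Real.rpow_pos_of_pos hσ _
  have h2a : (0:ℝ) < 2 ^ a / (-(a+c)) :=
    div_pos (Real.rpow_pos_of_pos two_pos a) (by linarith)
  have hsum : σ ^ (a-1) * (σ ^ (c+1) / (c+1)) = σ ^ (a+c) / (c+1) := by
    have h : σ ^ (a-1) * σ ^ (c+1) = σ ^ (a+c) := by
      rw [← Real.rpow_add hσ]; ring_nf
    rw [← mul_div_assoc, h]
  rcases le_or_gt t (2*σ) with h2 | h2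
  · calc ∫ u in σ..t, u ^ (a-1) * (u - σ) ^ c
        ≤ σ ^ (a-1) * ((t - σ) ^ (c+1) / (c+1)) := aux_basic hσ hσt.le ha0 hc1 hc0
      _ ≤ σ ^ (a-1) * (σ ^ (c+1) / (c+1)) := by
          apply mul_le_mul_of_nonneg_left _ (Real.rpow_nonneg hσ.le _)
          exact (div_le_div_iff_of_pos_right hc1').mpr
            (Real.rpow_le_rpow (by linarith) (by linarith) (by linarith))
      _ = σ ^ (a+c) / (c+1) := hsum
      _ ≤ (1/(c+1) + 2 ^ a / (-(a+c))) * σ ^ (a+c) := by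
          rw [add_mul]
          have h7 : σ ^ (a+c) / (c+1) = 1/(c+1) * σ ^ (a+c) := by ring
          nlinarith
  · have hs2 : σ ≤ 2*σ := by linarith
    have h2σ : (0:ℝ) < 2*σ := by linarith
    have hI1 : IntervalIntegrable (fun u => u ^ (a-1) * (u - σ) ^ c) volume σ (2*σ) :=
      aux_integrable hσ hs2 hc1
    have hI2 : IntervalIntegrable (fun u => u ^ (a-1) * (u - σ) ^ c) volume (2*σ) t := by
      apply (aux_integrable hσ hσt.le hc1).mono_set
      rw [Set.uIcc_of_le hσt.le, Set.uIcc_of_le (by linarith)]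
      exact Set.Icc_subset_Icc hs2 le_rfl
    have hIrhs : IntervalIntegrable (fun u : ℝ => 2^(-c) * u^(a+c-1)) volume (2*σ) t := by
      apply IntervalIntegrable.const_mul
      apply intervalIntegral.intervalIntegrable_rpow (μ := volume)
      right
      rw [Set.uIcc_of_le (by linarith)]
      intro h
      linarith [h.1]
    have partA : ∫ u in σ..(2*σ), u ^ (a-1) * (u - σ) ^ c ≤ σ ^ (a+c) / (c+1) := by
      have h8 := aux_basic (x := 2*σ) hσ hs2 ha0 hc1 hc0
      rw [show 2*σ - σ = σ by ring] at h8
      linarith [hsum ▸ h8]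
    have partB : ∫ u in (2*σ)..t, u ^ (a-1) * (u - σ) ^ c
        ≤ 2 ^ a / (-(a+c)) * σ ^ (a+c) := by
      have hq : (0:ℝ) < t ^ (a+c) := Real.rpow_pos_of_pos (by linarith) _
      calc ∫ u in (2*σ)..t, u ^ (a-1) * (u - σ) ^ c
          ≤ ∫ u in (2*σ)..t, 2^(-c) * u^(a+c-1) := by
            apply intervalIntegral.integral_mono_on (by linarith) hI2 hIrhs
            intro u hu
            have hu0 : (0:ℝ) < u := lt_of_lt_of_le h2σ hu.1
            have huσ : u/2 ≤ u - σ := by linarith [hu.1]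
            have h3 : (u-σ)^c ≤ (u/2)^c :=
              Real.rpow_le_rpow_of_nonpos (by positivity) huσ hc0.le
            have h4 : (u/2)^c = 2^(-c) * u^c := by
              rw [Real.div_rpow hu0.le (by norm_num : (0:ℝ) ≤ 2),
                Real.rpow_neg (by norm_num : (0:ℝ) ≤ 2)]
              ring
            calc u^(a-1)*(u-σ)^c ≤ u^(a-1)*(u/2)^c :=
                  mul_le_mul_of_nonneg_left h3 (Real.rpow_nonneg hu0.le _)
              _ = 2^(-c) * u^(a+c-1) := by
                  rw [h4, show u^(a-1)*(2^(-c)*u^c) = 2^(-c)*(u^(a-1)*u^c) from by ring,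
                    ← Real.rpow_add hu0]
                  ring_nf
        _ = 2^(-c) * ∫ u in (2*σ)..t, u^(a+c-1) := intervalIntegral.integral_const_mul _ _
        _ = 2^(-c) * ((t^(a+c) - (2*σ)^(a+c))/(a+c)) := by
            rw [integral_rpow (Or.inr ⟨by intro h; linarith, by
              rw [Set.uIcc_of_le (by linarith)]; intro h; linarith [h.1]⟩)]
            rw [show a+c-1+1 = a+c by ring]
        _ ≤ 2^(-c) * ((2*σ)^(a+c)/(-(a+c))) := by
            apply mul_le_mul_of_nonneg_left _ (Real.rpow_nonneg (by norm_num) _)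
            rw [show (t^(a+c) - (2*σ)^(a+c))/(a+c) = ((2*σ)^(a+c) - t^(a+c))/(-(a+c)) from by
              rw [show ((2*σ)^(a+c) - t^(a+c)) = -(t^(a+c) - (2*σ)^(a+c)) by ring,
                neg_div_neg_eq]]
            exact (div_le_div_iff_of_pos_right (by linarith)).mpr (by linarith)
        _ = 2 ^ a / (-(a+c)) * σ ^ (a+c) := by
            rw [Real.mul_rpow (by norm_num : (0:ℝ) ≤ 2) hσ.le,
              show (2:ℝ)^(-c) * ((2:ℝ)^(a+c) * σ^(a+c) / (-(a+c)))
                = ((2:ℝ)^(-c) * (2:ℝ)^(a+c)) * σ^(a+c) / (-(a+c)) from by ring,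
              ← Real.rpow_add (by norm_num : (0:ℝ) < 2), show -c + (a+c) = a by ring]
            ring
    rw [← intervalIntegral.integral_add_adjacent_intervals hI1 hI2, add_mul]
    have h9 : 1/(c+1) * σ^(a+c) = σ^(a+c)/(c+1) := by ring
    linarith

set_option maxHeartbeats 1000000 in
/-- For `H ∈ (0,1/2)`, `T > 0`, `γ ∈ (0,H)` there is a constant
`C = C_{H,T} > 0` (depending only on `H`, `T` and `γ`) such that for all
`0 < t₀' < t₀ < t ≤ T`,
`K_H(t,t₀) - K_H(t,t₀') ≤ C ((t₀-t₀')^γ/(t₀t₀')^γ) t₀^{H-1/2-γ} (t-t₀)^{H-1/2-γ}`. -/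
theorem statement18 (H T γ : ℝ) (hH : H ∈ Set.Ioo (0 : ℝ) (1 / 2)) (hT : 0 < T)
    (hγ : γ ∈ Set.Ioo (0 : ℝ) H) :
    ∃ C > (0 : ℝ), ∀ t₀' t₀ t : ℝ, 0 < t₀' → t₀' < t₀ → t₀ < t → t ≤ T →
      KH H t t₀ - KH H t t₀' ≤
        C * ((t₀ - t₀') ^ γ / (t₀ * t₀') ^ γ) * t₀ ^ (H - 1 / 2 - γ)
          * (t - t₀) ^ (H - 1 / 2 - γ) := by
  obtain ⟨hH0, hH2⟩ := hH
  obtain ⟨hγ0, hγH⟩ := hγ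
  set a : ℝ := H - 1/2 with ha_def
  set b : ℝ := 1/2 - H with hb_def
  have ha0 : a < 0 := by rw [ha_def]; linarith
  have ha1 : -1 ≤ a := by rw [ha_def]; linarith
  have ha1' : -1 < a := by rw [ha_def]; linarith
  have hb0 : 0 < b := by rw [hb_def]; linarith
  have hb1 : b ≤ 1 := by rw [hb_def]; linarith
  have hab : a + b = 0 := by rw [ha_def, hb_def]; ring
  have hγ1 : γ ≤ 1 := by linarith
  have haγ1 : -1 < a - γ := by rw [ha_def]; linarith
  have haγ0 : a - γ < 0 := by linarith
  set KI : ℝ := 1/(a+1) + 2 ^ a / (-(a+a)) with hKI_def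
  set KJ : ℝ := 1/(a-γ+1) + 2 ^ a / (-(a+(a-γ))) with hKJ_def
  set κ : ℝ := T ^ (3*γ - a) with hκ_def
  have hκ0 : 0 < κ := Real.rpow_pos_of_pos hT _
  have hKI0 : 0 < KI := by
    apply add_pos
    · apply div_pos one_pos; rw [ha_def]; linarith
    · exact div_pos (Real.rpow_pos_of_pos two_pos a) (by rw [ha_def]; linarith)
  have hKJ0 : 0 < KJ := by
    apply add_pos
    · apply div_pos one_pos; rw [ha_def]; linarith
    · exact div_pos (Real.rpow_pos_of_pos two_pos a) (by rw [ha_def]; linarith)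
  have hcH : 0 ≤ cH H := Real.sqrt_nonneg _
  refine ⟨cH H * ((2 + b*(KI+KJ)) * κ) + 1, by positivity, ?_⟩
  intro s' s t hs'0 hs's hst htT
  have hs0 : 0 < s := lt_trans hs'0 hs's
  have ht0 : 0 < t := lt_trans hs0 hst
  have hsT : s ≤ T := le_of_lt (lt_of_lt_of_le hst htT)
  have hs'T : s' ≤ T := by linarith only [hs's, hsT]
  have hts0 : 0 < t - s := by linarith only [hst]
  have htsT : t - s ≤ T := by linarith only [htT, hs0]
  have hδ0 : 0 < s - s' := by linarith only [hs's]
  have hδγ0 : 0 ≤ (s - s') ^ γ := Real.rpow_nonneg hδ0.le γ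
  -- rewrite KH in interval-integral form
  have key : ∀ σ : ℝ, 0 < σ → σ < t →
      KH H t σ = cH H * (t ^ a * σ ^ b * (t - σ) ^ a
        + b * σ ^ b * ∫ u in σ..t, u ^ (a-1) * (u - σ) ^ a) := by
    intro σ hσ0 hσt
    rw [KH]
    rw [show (H - 3/2 : ℝ) = a - 1 by rw [ha_def]; ring]
    rw [show (H - 1/2 : ℝ) = a by rw [ha_def]]
    rw [show (1/2 - H : ℝ) = b by rw [hb_def]]
    rw [← MeasureTheory.integral_Ioc_eq_integral_Ioo,
      ← intervalIntegral.integral_of_le hσt.le]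
    rw [Real.div_rpow ht0.le hσ0.le, div_eq_mul_inv, ← Real.rpow_neg hσ0.le]
    rw [show (-a : ℝ) = b by rw [ha_def, hb_def]; ring]
  have hKs := key s hs0 hst
  have hKs' := key s' hs'0 (by linarith only [hs's, hst])
  set Is : ℝ := ∫ u in s..t, u ^ (a-1) * (u - s) ^ a with hIs_def
  set Is' : ℝ := ∫ u in s'..t, u ^ (a-1) * (u - s') ^ a with hIs'_def
  set R : ℝ := (s - s') ^ γ * (s ^ (a-2*γ) * s' ^ (-γ) * (t-s) ^ (a-γ)) with hR_def
  have hR0 : 0 < R := by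
    rw [hR_def]
    exact mul_pos (Real.rpow_pos_of_pos hδ0 γ) (mul_pos (mul_pos
      (Real.rpow_pos_of_pos hs0 _) (Real.rpow_pos_of_pos hs'0 _))
      (Real.rpow_pos_of_pos hts0 _))
  -- the generic exponent-counting tail
  have tail : ∀ e1 e2 e3 : ℝ, a - 2*γ ≤ e1 → -γ ≤ e2 → a - γ ≤ e3 →
      (e1 - (a-2*γ)) + (e2 - -γ) + (e3 - (a-γ)) = 3*γ - a →
      (s-s') ^ γ * (s ^ e1 * s' ^ e2 * (t-s) ^ e3) ≤ κ * R := by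
    intro e1 e2 e3 h1 h2 h3 hsumEq
    have b1 := aux_exp hs0 hsT h1
    have b2 := aux_exp hs'0 hs'T h2
    have b3 := aux_exp hts0 htsT h3
    have hTp : ∀ x : ℝ, (0:ℝ) ≤ T ^ x := fun x => Real.rpow_nonneg hT.le x
    have step : s ^ e1 * s' ^ e2 * (t-s) ^ e3 ≤
        (T ^ (e1-(a-2*γ)) * s ^ (a-2*γ)) * (T ^ (e2 - -γ) * s' ^ (-γ))
          * (T ^ (e3-(a-γ)) * (t-s) ^ (a-γ)) := by
      apply mul_le_mul (mul_le_mul b1 b2 (Real.rpow_nonneg hs'0.le _)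
        (mul_nonneg (hTp _) (Real.rpow_nonneg hs0.le _))) b3
        (Real.rpow_nonneg hts0.le _)
      exact mul_nonneg (mul_nonneg (hTp _) (Real.rpow_nonneg hs0.le _))
        (mul_nonneg (hTp _) (Real.rpow_nonneg hs'0.le _))
    have hTeq : T ^ (e1-(a-2*γ)) * T ^ (e2 - -γ) * T ^ (e3-(a-γ)) = κ := by
      rw [← Real.rpow_add hT, ← Real.rpow_add hT, hκ_def]
      congr 1
    calc (s-s') ^ γ * (s ^ e1 * s' ^ e2 * (t-s) ^ e3)
        ≤ (s-s') ^ γ * ((T ^ (e1-(a-2*γ)) * s ^ (a-2*γ)) * (T ^ (e2 - -γ) * s' ^ (-γ))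
            * (T ^ (e3-(a-γ)) * (t-s) ^ (a-γ))) := mul_le_mul_of_nonneg_left step hδγ0
      _ = (T ^ (e1-(a-2*γ)) * T ^ (e2 - -γ) * T ^ (e3-(a-γ)))
            * ((s-s') ^ γ * (s ^ (a-2*γ) * s' ^ (-γ) * (t-s) ^ (a-γ))) := by ring
      _ = κ * R := by rw [hTeq, hR_def]
  -- basic monotone facts
  have hta : t ^ a ≤ s ^ a := Real.rpow_le_rpow_of_nonpos hs0 hst.le ha0.le
  have hts'a : (t-s') ^ a ≤ (t-s) ^ a :=
    Real.rpow_le_rpow_of_nonpos hts0 (by linarith only [hs's]) ha0.le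
  have hsab : s ^ a * s ^ b = 1 := by
    rw [← Real.rpow_add hs0, hab, Real.rpow_zero]
  have htsab : t ^ a * s ^ b ≤ 1 := by
    calc t ^ a * s ^ b ≤ s ^ a * s ^ b :=
          mul_le_mul_of_nonneg_right hta (Real.rpow_nonneg hs0.le b)
      _ = 1 := hsab
  have hBpos : s ^ b - s' ^ b ≤ (s-s') ^ γ * s ^ b * s' ^ (-γ) :=
    aux_posdiff hs'0 hs's.le hb1 hγ0 hγ1
  have hBnonneg : 0 ≤ s ^ b - s' ^ b := by
    have h := Real.rpow_le_rpow hs'0.le hs's.le hb0.le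
    linarith only [h]
  -- P1
  have hP1 : t ^ a * s ^ b * ((t-s) ^ a - (t-s') ^ a) ≤ κ * R := by
    have hC1 : (t-s) ^ a - (t-s') ^ a ≤ (s-s') ^ γ * (t-s) ^ (a-γ) := by
      have h := aux_negdiff (x := t-s) (y := t-s') hts0 (by linarith only [hs's]) ha1 hγ0 hγ1
      rwa [show t - s' - (t-s) = s - s' by ring] at h
    have hd0 : 0 ≤ (t-s) ^ a - (t-s') ^ a := by linarith only [hts'a]
    calc t ^ a * s ^ b * ((t-s) ^ a - (t-s') ^ a)
        ≤ 1 * ((s-s') ^ γ * (t-s) ^ (a-γ)) := mul_le_mul htsab hC1 hd0 zero_le_one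
      _ = (s-s') ^ γ * (s ^ (0:ℝ) * s' ^ (0:ℝ) * (t-s) ^ (a-γ)) := by
          rw [Real.rpow_zero, Real.rpow_zero]; ring
      _ ≤ κ * R := tail 0 0 (a-γ) (by linarith only [ha0, hγ0]) (by linarith only [hγ0])
          le_rfl (by ring)
  -- P2
  have hP2 : t ^ a * (s ^ b - s' ^ b) * (t-s') ^ a ≤ κ * R := by
    have step1 : t ^ a * (s ^ b - s' ^ b) ≤ s ^ a * ((s-s') ^ γ * s ^ b * s' ^ (-γ)) :=
      mul_le_mul hta hBpos hBnonneg (Real.rpow_nonneg hs0.le a)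
    have hrhs0 : 0 ≤ s ^ a * ((s-s') ^ γ * s ^ b * s' ^ (-γ)) :=
      mul_nonneg (Real.rpow_nonneg hs0.le a) (mul_nonneg (mul_nonneg hδγ0
        (Real.rpow_nonneg hs0.le b)) (Real.rpow_nonneg hs'0.le _))
    calc t ^ a * (s ^ b - s' ^ b) * (t-s') ^ a
        ≤ s ^ a * ((s-s') ^ γ * s ^ b * s' ^ (-γ)) * (t-s) ^ a := by
          apply mul_le_mul step1 hts'a
            (Real.rpow_nonneg (by linarith only [hs'0, hst, hs's]) a) hrhs0
      _ = (s ^ a * s ^ b) * ((s-s') ^ γ * (s ^ (0:ℝ) * s' ^ (-γ) * (t-s) ^ a)) := by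
          rw [Real.rpow_zero]; ring
      _ = (s-s') ^ γ * (s ^ (0:ℝ) * s' ^ (-γ) * (t-s) ^ a) := by rw [hsab, one_mul]
      _ ≤ κ * R := tail 0 (-γ) a (by linarith only [ha0, hγ0]) le_rfl
          (by linarith only [hγ0]) (by ring)
  -- bounds on the integrals
  have hIs_bound : Is ≤ KI * s ^ (a+a) := by
    rw [hIs_def, hKI_def]
    exact aux_J hs0 hst ha0 ha1' ha0
  have hIs_nonneg : 0 ≤ Is := by
    rw [hIs_def]
    apply intervalIntegral.integral_nonneg hst.le
    intro u hu
    exact mul_nonneg (Real.rpow_nonneg (by linarith only [hu.1, hs'0, hs's, hs0]) _)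
      (Real.rpow_nonneg (by linarith only [hu.1, hs'0, hs's, hs0]) _)
  have hJ_bound : (∫ u in s..t, u ^ (a-1) * (u - s) ^ (a-γ)) ≤ KJ * s ^ (a+(a-γ)) := by
    rw [hKJ_def]
    exact aux_J hs0 hst ha0 haγ1 haγ0
  have hJ_nonneg : 0 ≤ ∫ u in s..t, u ^ (a-1) * (u - s) ^ (a-γ) := by
    apply intervalIntegral.integral_nonneg hst.le
    intro u hu
    exact mul_nonneg (Real.rpow_nonneg (by linarith only [hu.1, hs'0, hs's, hs0]) _)
      (Real.rpow_nonneg (by linarith only [hu.1, hs'0, hs's, hs0]) _)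
  -- difference of the two integrals
  have hIdiff : Is - Is' ≤ (s-s') ^ γ * ∫ u in s..t, u ^ (a-1) * (u - s) ^ (a-γ) := by
    have hint1 : IntervalIntegrable (fun u => u ^ (a-1) * (u-s) ^ a) volume s t :=
      aux_integrable hs0 hst.le ha1'
    have hint2 : IntervalIntegrable (fun u => u ^ (a-1) * (u-s') ^ a) volume s' t :=
      aux_integrable hs'0 (by linarith only [hs's, hst]) ha1'
    have hint3 : IntervalIntegrable (fun u => u ^ (a-1) * (u-s') ^ a) volume s' s :=
      aux_integrable hs'0 hs's.le ha1'
    have hint4 : IntervalIntegrable (fun u => u ^ (a-1) * (u-s') ^ a) volume s t := by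
      apply hint2.mono_set
      rw [Set.uIcc_of_le hst.le, Set.uIcc_of_le (by linarith only [hs's, hst] : s' ≤ t)]
      exact Set.Icc_subset_Icc hs's.le le_rfl
    have hint5 : IntervalIntegrable (fun u => u ^ (a-1) * (u-s) ^ (a-γ)) volume s t :=
      aux_integrable hs0 hst.le haγ1
    have hsplit : Is' = (∫ u in s'..s, u ^ (a-1) * (u-s') ^ a)
        + ∫ u in s..t, u ^ (a-1) * (u-s') ^ a := by
      rw [hIs'_def]
      exact (intervalIntegral.integral_add_adjacent_intervals hint3 hint4).symm
    have hpos0 : 0 ≤ ∫ u in s'..s, u ^ (a-1) * (u-s') ^ a := by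
      apply intervalIntegral.integral_nonneg hs's.le
      intro u hu
      exact mul_nonneg (Real.rpow_nonneg (by linarith only [hu.1, hs'0, hs's, hs0]) _)
        (Real.rpow_nonneg (by linarith only [hu.1, hs'0, hs's, hs0]) _)
    have step : Is - (∫ u in s..t, u ^ (a-1) * (u-s') ^ a)
        ≤ (s-s') ^ γ * ∫ u in s..t, u ^ (a-1) * (u - s) ^ (a-γ) := by
      rw [hIs_def, ← intervalIntegral.integral_sub hint1 hint4,
        ← intervalIntegral.integral_const_mul]
      apply intervalIntegral.integral_mono_on hst.le (hint1.sub hint4)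
        (hint5.const_mul _)
      intro u hu
      show u ^ (a-1) * (u-s) ^ a - u ^ (a-1) * (u-s') ^ a
        ≤ (s-s') ^ γ * (u ^ (a-1) * (u-s) ^ (a-γ))
      rcases eq_or_lt_of_le hu.1 with he | hlt
      · rw [← he]
        simp only [sub_self, Real.zero_rpow (ne_of_lt ha0),
          Real.zero_rpow (ne_of_lt haγ0), mul_zero, zero_sub, neg_nonpos]
        have h0u : (0:ℝ) ≤ s ^ (a-1) := Real.rpow_nonneg hs0.le _
        have h0v : (0:ℝ) ≤ (s - s') ^ a := Real.rpow_nonneg hδ0.le _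
        exact mul_nonneg h0u h0v
      · have hx : 0 < u - s := by linarith only [hlt]
        have hnd := aux_negdiff (x := u-s) (y := u-s') hx (by linarith only [hs's]) ha1 hγ0 hγ1
        rw [show u - s' - (u-s) = s - s' by ring] at hnd
        have hu0 : 0 ≤ u ^ (a-1) := Real.rpow_nonneg (by linarith only [hu.1, hs'0, hs's, hs0]) _
        calc u ^ (a-1) * (u-s) ^ a - u ^ (a-1) * (u-s') ^ a
            = u ^ (a-1) * ((u-s) ^ a - (u-s') ^ a) := by ring
          _ ≤ u ^ (a-1) * ((s-s') ^ γ * (u-s) ^ (a-γ)) :=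
              mul_le_mul_of_nonneg_left hnd hu0
          _ = (s-s') ^ γ * (u ^ (a-1) * (u-s) ^ (a-γ)) := by ring
    linarith only [hsplit, hpos0, step]
  -- P3
  have hP3 : b * s' ^ b * (Is - Is') ≤ (b*KJ) * (κ * R) := by
    have hb's : 0 ≤ b * s' ^ b := mul_nonneg hb0.le (Real.rpow_nonneg hs'0.le b)
    have hs'b : s' ^ (-γ) * s' ^ (b+γ) = s' ^ b := by
      rw [← Real.rpow_add hs'0]
      congr 1
      ring
    have hs'bs : s' ^ (b+γ) ≤ s ^ (b+γ) :=
      Real.rpow_le_rpow hs'0.le hs's.le (by linarith)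
    have hmerge : s ^ (b+γ) * s ^ (a+(a-γ)) = s ^ (a+(a+b)) := by
      rw [← Real.rpow_add hs0]
      congr 1
      ring
    calc b * s' ^ b * (Is - Is')
        ≤ b * s' ^ b * ((s-s') ^ γ * ∫ u in s..t, u ^ (a-1) * (u - s) ^ (a-γ)) :=
          mul_le_mul_of_nonneg_left hIdiff hb's
      _ ≤ b * s' ^ b * ((s-s') ^ γ * (KJ * s ^ (a+(a-γ)))) := by
          apply mul_le_mul_of_nonneg_left _ hb's
          exact mul_le_mul_of_nonneg_left hJ_bound hδγ0
      _ = (b*KJ) * ((s-s') ^ γ * ((s' ^ (-γ) * s' ^ (b+γ)) * s ^ (a+(a-γ)))) := by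
          rw [hs'b]; ring
      _ ≤ (b*KJ) * ((s-s') ^ γ * ((s' ^ (-γ) * s ^ (b+γ)) * s ^ (a+(a-γ)))) := by
          apply mul_le_mul_of_nonneg_left _ (mul_nonneg hb0.le hKJ0.le)
          apply mul_le_mul_of_nonneg_left _ hδγ0
          apply mul_le_mul_of_nonneg_right _ (Real.rpow_nonneg hs0.le _)
          exact mul_le_mul_of_nonneg_left hs'bs (Real.rpow_nonneg hs'0.le _)
      _ = (b*KJ) * ((s-s') ^ γ * (s ^ (a+(a+b)) * s' ^ (-γ) * (t-s) ^ (0:ℝ))) := by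
          rw [Real.rpow_zero, mul_one, ← hmerge]
          ring
      _ ≤ (b*KJ) * (κ * R) := by
          apply mul_le_mul_of_nonneg_left _ (mul_nonneg hb0.le hKJ0.le)
          apply tail (a+(a+b)) (-γ) 0 (by rw [hab]; linarith only [hγ0]) le_rfl
            (by linarith only [ha0, hγ0]) (by rw [hab]; ring)
  -- P4
  have hP4 : b * (s ^ b - s' ^ b) * Is ≤ (b*KI) * (κ * R) := by
    have hmerge : s ^ b * s ^ (a+a) = s ^ (a+(a+b)) := by
      rw [← Real.rpow_add hs0]
      congr 1
      ring
    have hrhs0 : 0 ≤ b * ((s-s') ^ γ * s ^ b * s' ^ (-γ)) :=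
      mul_nonneg hb0.le (mul_nonneg (mul_nonneg hδγ0 (Real.rpow_nonneg hs0.le b))
        (Real.rpow_nonneg hs'0.le _))
    calc b * (s ^ b - s' ^ b) * Is
        ≤ b * ((s-s') ^ γ * s ^ b * s' ^ (-γ)) * (KI * s ^ (a+a)) := by
          apply mul_le_mul _ hIs_bound hIs_nonneg hrhs0
          exact mul_le_mul_of_nonneg_left hBpos hb0.le
      _ = (b*KI) * ((s-s') ^ γ * ((s ^ b * s ^ (a+a)) * s' ^ (-γ))) := by ring
      _ = (b*KI) * ((s-s') ^ γ * (s ^ (a+(a+b)) * s' ^ (-γ) * (t-s) ^ (0:ℝ))) := by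
          rw [hmerge, Real.rpow_zero]
          ring
      _ ≤ (b*KI) * (κ * R) := by
          apply mul_le_mul_of_nonneg_left _ (mul_nonneg hb0.le hKI0.le)
          apply tail (a+(a+b)) (-γ) 0 (by rw [hab]; linarith only [hγ0]) le_rfl
            (by linarith only [ha0, hγ0]) (by rw [hab]; ring)
  -- assemble
  have decomp : KH H t s - KH H t s' = cH H * (
      t ^ a * s ^ b * ((t-s) ^ a - (t-s') ^ a)
      + t ^ a * (s ^ b - s' ^ b) * (t-s') ^ a
      + b * s' ^ b * (Is - Is')
      + b * (s ^ b - s' ^ b) * Is) := by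
    rw [hKs, hKs']
    ring
  have hReq : (cH H * ((2 + b*(KI+KJ)) * κ) + 1) * ((s-s') ^ γ / (s*s') ^ γ)
      * s ^ (a-γ) * (t-s) ^ (a-γ) = (cH H * ((2 + b*(KI+KJ)) * κ) + 1) * R := by
    rw [hR_def, Real.mul_rpow hs0.le hs'0.le, Real.rpow_neg hs'0.le]
    have h1 : s ^ (a-γ) * (s ^ γ)⁻¹ = s ^ (a-2*γ) := by
      rw [← Real.rpow_neg hs0.le, ← Real.rpow_add hs0]
      congr 1
      ring
    rw [← h1]
    field_simp
  rw [decomp, hReq]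
  have hsum : t ^ a * s ^ b * ((t-s) ^ a - (t-s') ^ a)
      + t ^ a * (s ^ b - s' ^ b) * (t-s') ^ a
      + b * s' ^ b * (Is - Is')
      + b * (s ^ b - s' ^ b) * Is ≤ (2 + b*(KI+KJ)) * (κ * R) := by
    have expand : (2 + b*(KI+KJ)) * (κ * R)
        = κ * R + κ * R + (b*KJ) * (κ * R) + (b*KI) * (κ * R) := by ring
    rw [expand]
    linarith only [hP1, hP2, hP3, hP4]
  calc cH H * (t ^ a * s ^ b * ((t-s) ^ a - (t-s') ^ a)
      + t ^ a * (s ^ b - s' ^ b) * (t-s') ^ a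
      + b * s' ^ b * (Is - Is')
      + b * (s ^ b - s' ^ b) * Is)
      ≤ cH H * ((2 + b*(KI+KJ)) * (κ * R)) := mul_le_mul_of_nonneg_left hsum hcH
    _ = (cH H * ((2 + b*(KI+KJ)) * κ)) * R := by ring
    _ ≤ (cH H * ((2 + b*(KI+KJ)) * κ) + 1) * R :=
        mul_le_mul_of_nonneg_right (by linarith only []) hR0.le
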